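/- For t in the interval [3, 12], the absolute derivative of |J_0(t)|³ satisfies |d/dt |J_0(t)|³| = 3 J_0(t)² |J_1(t)| < 0.1. -/

import Mathlib

open Real

noncomputable def besselJ0 (t : ℝ) : ℝ :=
  (1 / Real.pi) * ∫ u in (0:ℝ)..Real.pi, Real.cos (t * Real.sin u)

/-- Bessel function of the first kind of order 1. -/
noncomputable def besselJ1 (t : ℝ) : ℝ :=
  (1 / Real.pi) * ∫ u in (0:ℝ)..Real.pi, Real.cos (u - t * Real.sin u)

open intervalIntegral MeasureTheory

private lemma nonneg_of_hasDerivAt {f f' : ℝ → ℝ}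
    (hd : ∀ x, HasDerivAt f (f' x) x) (h0 : f 0 = 0)
    (hd0 : ∀ x, 0 ≤ x → 0 ≤ f' x) : ∀ x, 0 ≤ x → 0 ≤ f x := by
  intro x hx
  have hmono : MonotoneOn f (Set.Ici (0:ℝ)) := by
    apply monotoneOn_of_deriv_nonneg (convex_Ici 0)
    · exact fun y _ => (hd y).continuousAt.continuousWithinAt
    · exact fun y _ => ((hd y).differentiableAt).differentiableWithinAt
    · intro y hy
      rw [(hd y).deriv]
      exact hd0 y (le_of_lt (by simpa [interior_Ici] using hy))
  have h := hmono Set.self_mem_Ici (Set.mem_Ici.2 hx) hx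
  rw [h0] at h; exact h

private lemma sin_ub0 : ∀ x : ℝ, 0 ≤ x → Real.sin x ≤ x := by
  have hd : ∀ y : ℝ, HasDerivAt (fun z : ℝ => z - Real.sin z)
      (1 - (Real.cos y)) y := by
    intro y
    have h := (hasDerivAt_id' (𝕜 := ℝ) y).sub (Real.hasDerivAt_sin y)
    exact h.congr_deriv (by norm_num <;> ring)
  intro x hx
  have h0 := nonneg_of_hasDerivAt hd (by norm_num) (fun y hy => by
    linarith [Real.cos_le_one y]) x hx
  nlinarith [h0]

private lemma cos_lb1 : ∀ x : ℝ, 0 ≤ x → 1 - x ^ 2 / 2 ≤ Real.cos x := by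
  intro x _; have := Real.one_sub_sq_div_two_le_cos (x := x); linarith

private lemma sin_lb1 : ∀ x : ℝ, 0 ≤ x → x - x ^ 3 / 6 ≤ Real.sin x := by
  have hd : ∀ y : ℝ, HasDerivAt (fun z : ℝ => -z + z ^ 3 / 6 + Real.sin z)
      (-1 + 3 * y ^ 2 / 6 + (Real.cos y)) y := by
    intro y
    have h := ((hasDerivAt_id' (𝕜 := ℝ) y).neg.add ((hasDerivAt_pow 3 y).div_const 6)).add (Real.hasDerivAt_sin y)
    exact h.congr_deriv (by norm_num <;> ring)
  intro x hx
  have h0 := nonneg_of_hasDerivAt hd (by norm_num) (fun y hy => by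
    have h1 := cos_lb1 y hy; linarith [h1]) x hx
  nlinarith [h0]

private lemma cos_ub2 : ∀ x : ℝ, 0 ≤ x → Real.cos x ≤ 1 - x ^ 2 / 2 + x ^ 4 / 24 := by
  have hd : ∀ y : ℝ, HasDerivAt (fun z : ℝ => 1 - z ^ 2 / 2 + z ^ 4 / 24 - Real.cos z)
      (0 - 2 * y ^ 1 / 2 + 4 * y ^ 3 / 24 - (-Real.sin y)) y := by
    intro y
    have h := (((hasDerivAt_const y (1:ℝ)).sub ((hasDerivAt_pow 2 y).div_const 2)).add ((hasDerivAt_pow 4 y).div_const 24)).sub (Real.hasDerivAt_cos y)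
    exact h.congr_deriv (by norm_num <;> ring)
  intro x hx
  have h0 := nonneg_of_hasDerivAt hd (by norm_num) (fun y hy => by
    have h1 := sin_lb1 y hy; linarith [h1]) x hx
  nlinarith [h0]

private lemma sin_ub2 : ∀ x : ℝ, 0 ≤ x → Real.sin x ≤ x - x ^ 3 / 6 + x ^ 5 / 120 := by
  have hd : ∀ y : ℝ, HasDerivAt (fun z : ℝ => z - z ^ 3 / 6 + z ^ 5 / 120 - Real.sin z)
      (1 - 3 * y ^ 2 / 6 + 5 * y ^ 4 / 120 - (Real.cos y)) y := by
    intro y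
    have h := (((hasDerivAt_id' (𝕜 := ℝ) y).sub ((hasDerivAt_pow 3 y).div_const 6)).add ((hasDerivAt_pow 5 y).div_const 120)).sub (Real.hasDerivAt_sin y)
    exact h.congr_deriv (by norm_num <;> ring)
  intro x hx
  have h0 := nonneg_of_hasDerivAt hd (by norm_num) (fun y hy => by
    have h1 := cos_ub2 y hy; linarith [h1]) x hx
  nlinarith [h0]

private lemma cos_lb3 : ∀ x : ℝ, 0 ≤ x → 1 - x ^ 2 / 2 + x ^ 4 / 24 - x ^ 6 / 720 ≤ Real.cos x := by
  have hd : ∀ y : ℝ, HasDerivAt (fun z : ℝ => -1 + z ^ 2 / 2 - z ^ 4 / 24 + z ^ 6 / 720 + Real.cos z)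
      (-0 + 2 * y ^ 1 / 2 - 4 * y ^ 3 / 24 + 6 * y ^ 5 / 720 + (-Real.sin y)) y := by
    intro y
    have h := ((((hasDerivAt_const y (1:ℝ)).neg.add ((hasDerivAt_pow 2 y).div_const 2)).sub ((hasDerivAt_pow 4 y).div_const 24)).add ((hasDerivAt_pow 6 y).div_const 720)).add (Real.hasDerivAt_cos y)
    exact h.congr_deriv (by norm_num <;> ring)
  intro x hx
  have h0 := nonneg_of_hasDerivAt hd (by norm_num) (fun y hy => by
    have h1 := sin_ub2 y hy; linarith [h1]) x hx
  nlinarith [h0]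

private lemma sin_lb3 : ∀ x : ℝ, 0 ≤ x → x - x ^ 3 / 6 + x ^ 5 / 120 - x ^ 7 / 5040 ≤ Real.sin x := by
  have hd : ∀ y : ℝ, HasDerivAt (fun z : ℝ => -z + z ^ 3 / 6 - z ^ 5 / 120 + z ^ 7 / 5040 + Real.sin z)
      (-1 + 3 * y ^ 2 / 6 - 5 * y ^ 4 / 120 + 7 * y ^ 6 / 5040 + (Real.cos y)) y := by
    intro y
    have h := ((((hasDerivAt_id' (𝕜 := ℝ) y).neg.add ((hasDerivAt_pow 3 y).div_const 6)).sub ((hasDerivAt_pow 5 y).div_const 120)).add ((hasDerivAt_pow 7 y).div_const 5040)).add (Real.hasDerivAt_sin y)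
    exact h.congr_deriv (by norm_num <;> ring)
  intro x hx
  have h0 := nonneg_of_hasDerivAt hd (by norm_num) (fun y hy => by
    have h1 := cos_lb3 y hy; linarith [h1]) x hx
  nlinarith [h0]

private lemma cos_ub4 : ∀ x : ℝ, 0 ≤ x → Real.cos x ≤ 1 - x ^ 2 / 2 + x ^ 4 / 24 - x ^ 6 / 720 + x ^ 8 / 40320 := by
  have hd : ∀ y : ℝ, HasDerivAt (fun z : ℝ => 1 - z ^ 2 / 2 + z ^ 4 / 24 - z ^ 6 / 720 + z ^ 8 / 40320 - Real.cos z)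
      (0 - 2 * y ^ 1 / 2 + 4 * y ^ 3 / 24 - 6 * y ^ 5 / 720 + 8 * y ^ 7 / 40320 - (-Real.sin y)) y := by
    intro y
    have h := (((((hasDerivAt_const y (1:ℝ)).sub ((hasDerivAt_pow 2 y).div_const 2)).add ((hasDerivAt_pow 4 y).div_const 24)).sub ((hasDerivAt_pow 6 y).div_const 720)).add ((hasDerivAt_pow 8 y).div_const 40320)).sub (Real.hasDerivAt_cos y)
    exact h.congr_deriv (by norm_num <;> ring)
  intro x hx
  have h0 := nonneg_of_hasDerivAt hd (by norm_num) (fun y hy => by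
    have h1 := sin_lb3 y hy; linarith [h1]) x hx
  nlinarith [h0]

private lemma sin_ub4 : ∀ x : ℝ, 0 ≤ x → Real.sin x ≤ x - x ^ 3 / 6 + x ^ 5 / 120 - x ^ 7 / 5040 + x ^ 9 / 362880 := by
  have hd : ∀ y : ℝ, HasDerivAt (fun z : ℝ => z - z ^ 3 / 6 + z ^ 5 / 120 - z ^ 7 / 5040 + z ^ 9 / 362880 - Real.sin z)
      (1 - 3 * y ^ 2 / 6 + 5 * y ^ 4 / 120 - 7 * y ^ 6 / 5040 + 9 * y ^ 8 / 362880 - (Real.cos y)) y := by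
    intro y
    have h := (((((hasDerivAt_id' (𝕜 := ℝ) y).sub ((hasDerivAt_pow 3 y).div_const 6)).add ((hasDerivAt_pow 5 y).div_const 120)).sub ((hasDerivAt_pow 7 y).div_const 5040)).add ((hasDerivAt_pow 9 y).div_const 362880)).sub (Real.hasDerivAt_sin y)
    exact h.congr_deriv (by norm_num <;> ring)
  intro x hx
  have h0 := nonneg_of_hasDerivAt hd (by norm_num) (fun y hy => by
    have h1 := cos_ub4 y hy; linarith [h1]) x hx
  nlinarith [h0]

private lemma cos_lb5 : ∀ x : ℝ, 0 ≤ x → 1 - x ^ 2 / 2 + x ^ 4 / 24 - x ^ 6 / 720 + x ^ 8 / 40320 - x ^ 10 / 3628800 ≤ Real.cos x := by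
  have hd : ∀ y : ℝ, HasDerivAt (fun z : ℝ => -1 + z ^ 2 / 2 - z ^ 4 / 24 + z ^ 6 / 720 - z ^ 8 / 40320 + z ^ 10 / 3628800 + Real.cos z)
      (-0 + 2 * y ^ 1 / 2 - 4 * y ^ 3 / 24 + 6 * y ^ 5 / 720 - 8 * y ^ 7 / 40320 + 10 * y ^ 9 / 3628800 + (-Real.sin y)) y := by
    intro y
    have h := ((((((hasDerivAt_const y (1:ℝ)).neg.add ((hasDerivAt_pow 2 y).div_const 2)).sub ((hasDerivAt_pow 4 y).div_const 24)).add ((hasDerivAt_pow 6 y).div_const 720)).sub ((hasDerivAt_pow 8 y).div_const 40320)).add ((hasDerivAt_pow 10 y).div_const 3628800)).add (Real.hasDerivAt_cos y)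
    exact h.congr_deriv (by norm_num <;> ring)
  intro x hx
  have h0 := nonneg_of_hasDerivAt hd (by norm_num) (fun y hy => by
    have h1 := sin_ub4 y hy; linarith [h1]) x hx
  nlinarith [h0]

private lemma sin_lb5 : ∀ x : ℝ, 0 ≤ x → x - x ^ 3 / 6 + x ^ 5 / 120 - x ^ 7 / 5040 + x ^ 9 / 362880 - x ^ 11 / 39916800 ≤ Real.sin x := by
  have hd : ∀ y : ℝ, HasDerivAt (fun z : ℝ => -z + z ^ 3 / 6 - z ^ 5 / 120 + z ^ 7 / 5040 - z ^ 9 / 362880 + z ^ 11 / 39916800 + Real.sin z)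
      (-1 + 3 * y ^ 2 / 6 - 5 * y ^ 4 / 120 + 7 * y ^ 6 / 5040 - 9 * y ^ 8 / 362880 + 11 * y ^ 10 / 39916800 + (Real.cos y)) y := by
    intro y
    have h := ((((((hasDerivAt_id' (𝕜 := ℝ) y).neg.add ((hasDerivAt_pow 3 y).div_const 6)).sub ((hasDerivAt_pow 5 y).div_const 120)).add ((hasDerivAt_pow 7 y).div_const 5040)).sub ((hasDerivAt_pow 9 y).div_const 362880)).add ((hasDerivAt_pow 11 y).div_const 39916800)).add (Real.hasDerivAt_sin y)
    exact h.congr_deriv (by norm_num <;> ring)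
  intro x hx
  have h0 := nonneg_of_hasDerivAt hd (by norm_num) (fun y hy => by
    have h1 := cos_lb5 y hy; linarith [h1]) x hx
  nlinarith [h0]

private lemma cos_ub6 : ∀ x : ℝ, 0 ≤ x → Real.cos x ≤ 1 - x ^ 2 / 2 + x ^ 4 / 24 - x ^ 6 / 720 + x ^ 8 / 40320 - x ^ 10 / 3628800 + x ^ 12 / 479001600 := by
  have hd : ∀ y : ℝ, HasDerivAt (fun z : ℝ => 1 - z ^ 2 / 2 + z ^ 4 / 24 - z ^ 6 / 720 + z ^ 8 / 40320 - z ^ 10 / 3628800 + z ^ 12 / 479001600 - Real.cos z)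
      (0 - 2 * y ^ 1 / 2 + 4 * y ^ 3 / 24 - 6 * y ^ 5 / 720 + 8 * y ^ 7 / 40320 - 10 * y ^ 9 / 3628800 + 12 * y ^ 11 / 479001600 - (-Real.sin y)) y := by
    intro y
    have h := (((((((hasDerivAt_const y (1:ℝ)).sub ((hasDerivAt_pow 2 y).div_const 2)).add ((hasDerivAt_pow 4 y).div_const 24)).sub ((hasDerivAt_pow 6 y).div_const 720)).add ((hasDerivAt_pow 8 y).div_const 40320)).sub ((hasDerivAt_pow 10 y).div_const 3628800)).add ((hasDerivAt_pow 12 y).div_const 479001600)).sub (Real.hasDerivAt_cos y)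
    exact h.congr_deriv (by norm_num <;> ring)
  intro x hx
  have h0 := nonneg_of_hasDerivAt hd (by norm_num) (fun y hy => by
    have h1 := sin_lb5 y hy; linarith [h1]) x hx
  nlinarith [h0]

private lemma sin_ub6 : ∀ x : ℝ, 0 ≤ x → Real.sin x ≤ x - x ^ 3 / 6 + x ^ 5 / 120 - x ^ 7 / 5040 + x ^ 9 / 362880 - x ^ 11 / 39916800 + x ^ 13 / 6227020800 := by
  have hd : ∀ y : ℝ, HasDerivAt (fun z : ℝ => z - z ^ 3 / 6 + z ^ 5 / 120 - z ^ 7 / 5040 + z ^ 9 / 362880 - z ^ 11 / 39916800 + z ^ 13 / 6227020800 - Real.sin z)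
      (1 - 3 * y ^ 2 / 6 + 5 * y ^ 4 / 120 - 7 * y ^ 6 / 5040 + 9 * y ^ 8 / 362880 - 11 * y ^ 10 / 39916800 + 13 * y ^ 12 / 6227020800 - (Real.cos y)) y := by
    intro y
    have h := (((((((hasDerivAt_id' (𝕜 := ℝ) y).sub ((hasDerivAt_pow 3 y).div_const 6)).add ((hasDerivAt_pow 5 y).div_const 120)).sub ((hasDerivAt_pow 7 y).div_const 5040)).add ((hasDerivAt_pow 9 y).div_const 362880)).sub ((hasDerivAt_pow 11 y).div_const 39916800)).add ((hasDerivAt_pow 13 y).div_const 6227020800)).sub (Real.hasDerivAt_sin y)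
    exact h.congr_deriv (by norm_num <;> ring)
  intro x hx
  have h0 := nonneg_of_hasDerivAt hd (by norm_num) (fun y hy => by
    have h1 := cos_ub6 y hy; linarith [h1]) x hx
  nlinarith [h0]

private lemma cos_lb7 : ∀ x : ℝ, 0 ≤ x → 1 - x ^ 2 / 2 + x ^ 4 / 24 - x ^ 6 / 720 + x ^ 8 / 40320 - x ^ 10 / 3628800 + x ^ 12 / 479001600 - x ^ 14 / 87178291200 ≤ Real.cos x := by
  have hd : ∀ y : ℝ, HasDerivAt (fun z : ℝ => -1 + z ^ 2 / 2 - z ^ 4 / 24 + z ^ 6 / 720 - z ^ 8 / 40320 + z ^ 10 / 3628800 - z ^ 12 / 479001600 + z ^ 14 / 87178291200 + Real.cos z)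
      (-0 + 2 * y ^ 1 / 2 - 4 * y ^ 3 / 24 + 6 * y ^ 5 / 720 - 8 * y ^ 7 / 40320 + 10 * y ^ 9 / 3628800 - 12 * y ^ 11 / 479001600 + 14 * y ^ 13 / 87178291200 + (-Real.sin y)) y := by
    intro y
    have h := ((((((((hasDerivAt_const y (1:ℝ)).neg.add ((hasDerivAt_pow 2 y).div_const 2)).sub ((hasDerivAt_pow 4 y).div_const 24)).add ((hasDerivAt_pow 6 y).div_const 720)).sub ((hasDerivAt_pow 8 y).div_const 40320)).add ((hasDerivAt_pow 10 y).div_const 3628800)).sub ((hasDerivAt_pow 12 y).div_const 479001600)).add ((hasDerivAt_pow 14 y).div_const 87178291200)).add (Real.hasDerivAt_cos y)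
    exact h.congr_deriv (by norm_num <;> ring)
  intro x hx
  have h0 := nonneg_of_hasDerivAt hd (by norm_num) (fun y hy => by
    have h1 := sin_ub6 y hy; linarith [h1]) x hx
  nlinarith [h0]


private lemma int_lin6 (c0 c1 c2 c3 c4 c5 c6 : ℝ) :
    (∫ u in (0:ℝ)..π, (c0 + c1 * Real.sin u ^ 2 + c2 * Real.sin u ^ 4 + c3 * Real.sin u ^ 6
      + c4 * Real.sin u ^ 8 + c5 * Real.sin u ^ 10 + c6 * Real.sin u ^ 12))
    = π * (c0 + c1 * (1/2) + c2 * (3/8) + c3 * (5/16) + c4 * (35/128) + c5 * (63/256)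
      + c6 * (231/1024)) := by
  have W1 : (∫ u in (0:ℝ)..π, Real.sin u ^ 2) = π * (1/2) := by
    rw [show (2:ℕ) = 2*1 from rfl, integral_sin_pow_even]; norm_num
  have W2 : (∫ u in (0:ℝ)..π, Real.sin u ^ 4) = π * (3/8) := by
    rw [show (4:ℕ) = 2*2 from rfl, integral_sin_pow_even]; norm_num [Finset.prod_range_succ]
  have W3 : (∫ u in (0:ℝ)..π, Real.sin u ^ 6) = π * (5/16) := by
    rw [show (6:ℕ) = 2*3 from rfl, integral_sin_pow_even]; norm_num [Finset.prod_range_succ]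
  have W4 : (∫ u in (0:ℝ)..π, Real.sin u ^ 8) = π * (35/128) := by
    rw [show (8:ℕ) = 2*4 from rfl, integral_sin_pow_even]; norm_num [Finset.prod_range_succ]
  have W5 : (∫ u in (0:ℝ)..π, Real.sin u ^ 10) = π * (63/256) := by
    rw [show (10:ℕ) = 2*5 from rfl, integral_sin_pow_even]; norm_num [Finset.prod_range_succ]
  have W6 : (∫ u in (0:ℝ)..π, Real.sin u ^ 12) = π * (231/1024) := by
    rw [show (12:ℕ) = 2*6 from rfl, integral_sin_pow_even]; norm_num [Finset.prod_range_succ]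
  have ible : ∀ (c : ℝ) (n : ℕ), IntervalIntegrable (fun u => c * Real.sin u ^ n)
      MeasureTheory.volume 0 π := fun c n =>
    (Continuous.intervalIntegrable (by fun_prop) _ _)
  have ic : ∀ g : ℝ → ℝ, Continuous g → IntervalIntegrable g MeasureTheory.volume 0 π :=
    fun g hg => hg.intervalIntegrable _ _
  rw [integral_add (ic _ (by fun_prop)) ((ible c6 12)), integral_add (ic _ (by fun_prop)) ((ible c5 10)),
    integral_add (ic _ (by fun_prop)) ((ible c4 8)), integral_add (ic _ (by fun_prop)) ((ible c3 6)),
    integral_add (ic _ (by fun_prop)) ((ible c2 4)), integral_add (ic _ (by fun_prop)) ((ible c1 2)),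
    intervalIntegral.integral_const_mul, intervalIntegral.integral_const_mul, intervalIntegral.integral_const_mul, intervalIntegral.integral_const_mul,
    intervalIntegral.integral_const_mul, intervalIntegral.integral_const_mul, intervalIntegral.integral_const]
  rw [W1, W2, W3, W4, W5, W6]
  simp [smul_eq_mul]
  ring


private lemma hasDerivAt_abs_cube (y : ℝ) :
    HasDerivAt (fun w : ℝ => |w| ^ 3) (3 * y * |y|) y := by
  rcases lt_trichotomy y 0 with hy | hy | hy
  · have he : (fun w : ℝ => -w ^ 3) =ᶠ[nhds y] fun w => |w| ^ 3 := by
      filter_upwards [eventually_lt_nhds hy] with w hw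
      rw [abs_of_neg hw]; ring
    have h := ((hasDerivAt_pow 3 y).neg).congr_of_eventuallyEq he.symm
    refine h.congr_deriv ?_
    rw [abs_of_neg hy]; push_cast; ring
  · subst hy
    rw [hasDerivAt_iff_tendsto_slope]
    have he : slope (fun w : ℝ => |w| ^ 3) 0 =ᶠ[nhdsWithin 0 {(0:ℝ)}ᶜ] fun w => w * |w| := by
      filter_upwards [self_mem_nhdsWithin] with w hw
      have hw0 : w ≠ 0 := hw
      rw [slope_def_field]
      field_simp
      rw [show |w| ^ 3 = |w| ^ 2 * |w| by ring, sq_abs]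
      ring
    rw [show (3:ℝ) * 0 * |0| = 0 by simp]
    apply Filter.Tendsto.congr' he.symm
    have : Filter.Tendsto (fun w : ℝ => w * |w|) (nhds 0) (nhds 0) := by
      have := (continuous_id.mul continuous_abs).tendsto (0:ℝ)
      simpa [Pi.mul_def] using this
    exact this.mono_left nhdsWithin_le_nhds
  · have he : (fun w : ℝ => w ^ 3) =ᶠ[nhds y] fun w => |w| ^ 3 := by
      filter_upwards [eventually_gt_nhds hy] with w hw
      rw [abs_of_pos hw]
    have h := (hasDerivAt_pow 3 y).congr_of_eventuallyEq he.symm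
    refine h.congr_deriv ?_
    rw [abs_of_pos hy]; push_cast; ring

private noncomputable def J0d (t : ℝ) : ℝ :=
  (1 / Real.pi) * ∫ u in (0:ℝ)..Real.pi, -(Real.sin u * Real.sin (t * Real.sin u))

private noncomputable def J0dd (t : ℝ) : ℝ :=
  (1 / Real.pi) * ∫ u in (0:ℝ)..Real.pi, -(Real.sin u ^ 2 * Real.cos (t * Real.sin u))

private lemma ic : ∀ g : ℝ → ℝ, Continuous g → IntervalIntegrable g volume 0 π :=
  fun g hg => hg.intervalIntegrable _ _

private lemma besselJ1_eq (t : ℝ) :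
    besselJ1 t = (1 / π) * ∫ u in (0:ℝ)..π, Real.sin u * Real.sin (t * Real.sin u) := by
  unfold besselJ1
  congr 1
  rw [integral_congr (g := fun u => Real.cos u * Real.cos (t * Real.sin u)
      + Real.sin u * Real.sin (t * Real.sin u)) (fun u _ => by rw [Real.cos_sub])]
  rw [integral_add (ic _ (by fun_prop)) (ic _ (by fun_prop))]
  have hz : (∫ u in (0:ℝ)..π, Real.cos u * Real.cos (t * Real.sin u)) = 0 := by
    have h := intervalIntegral.integral_comp_sub_left
      (a := 0) (b := π) (fun u => Real.cos u * Real.cos (t * Real.sin u)) π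
    simp only [Real.cos_pi_sub, Real.sin_pi_sub, sub_self, sub_zero, neg_mul] at h
    rw [intervalIntegral.integral_neg] at h
    linarith
  rw [hz, zero_add]

private lemma hasDerivAt_besselJ0 (t : ℝ) : HasDerivAt besselJ0 (J0d t) t := by
  unfold besselJ0 J0d
  apply HasDerivAt.const_mul
  refine (intervalIntegral.hasDerivAt_integral_of_dominated_loc_of_deriv_le
    (F := fun x u => Real.cos (x * Real.sin u))
    (F' := fun x u => -(Real.sin u * Real.sin (x * Real.sin u)))
    (bound := fun _ => 1) (s := Set.univ) Filter.univ_mem ?_ ?_ ?_ ?_ ?_ ?_).2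
  · exact Filter.Eventually.of_forall fun x => (by fun_prop : Continuous _).aestronglyMeasurable
  · exact ic _ (by fun_prop)
  · exact (by fun_prop : Continuous _).aestronglyMeasurable
  · refine Filter.Eventually.of_forall fun u _ x _ => ?_
    rw [Real.norm_eq_abs, abs_neg, abs_mul]
    exact mul_le_one₀ (Real.abs_sin_le_one u) (abs_nonneg _) (Real.abs_sin_le_one _)
  · exact intervalIntegrable_const
  · refine Filter.Eventually.of_forall fun u _ x _ => ?_
    have h := ((Real.hasDerivAt_cos (x * Real.sin u)).comp x
      (hasDerivAt_mul_const (Real.sin u)))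
    refine h.congr_deriv ?_
    ring

private lemma hasDerivAt_J0d (t : ℝ) : HasDerivAt J0d (J0dd t) t := by
  unfold J0d J0dd
  apply HasDerivAt.const_mul
  refine (intervalIntegral.hasDerivAt_integral_of_dominated_loc_of_deriv_le
    (F := fun x u => -(Real.sin u * Real.sin (x * Real.sin u)))
    (F' := fun x u => -(Real.sin u ^ 2 * Real.cos (x * Real.sin u)))
    (bound := fun _ => 1) (s := Set.univ) Filter.univ_mem ?_ ?_ ?_ ?_ ?_ ?_).2
  · exact Filter.Eventually.of_forall fun x => (by fun_prop : Continuous _).aestronglyMeasurable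
  · exact ic _ (by fun_prop)
  · exact (by fun_prop : Continuous _).aestronglyMeasurable
  · refine Filter.Eventually.of_forall fun u _ x _ => ?_
    rw [Real.norm_eq_abs, abs_neg, abs_mul, abs_pow]
    exact mul_le_one₀ (pow_le_one₀ (abs_nonneg _) (Real.abs_sin_le_one u)) (abs_nonneg _)
      (Real.abs_cos_le_one _)
  · exact intervalIntegrable_const
  · refine Filter.Eventually.of_forall fun u _ x _ => ?_
    have h := (((Real.hasDerivAt_sin (x * Real.sin u)).comp x
      (hasDerivAt_mul_const (Real.sin u))).const_mul (Real.sin u)).neg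
    refine h.congr_deriv ?_
    ring

private lemma parts (t : ℝ) :
    t * (∫ u in (0:ℝ)..π, Real.cos u ^ 2 * Real.cos (t * Real.sin u))
      = ∫ u in (0:ℝ)..π, Real.sin u * Real.sin (t * Real.sin u) := by
  have h := intervalIntegral.integral_mul_deriv_eq_deriv_mul
    (u := fun w => Real.cos w) (u' := fun w => -Real.sin w)
    (v := fun w => Real.sin (t * Real.sin w))
    (v' := fun w => Real.cos (t * Real.sin w) * (t * Real.cos w))
    (fun w _ => Real.hasDerivAt_cos w)
    (fun w _ => by
      have := (Real.hasDerivAt_sin (t * Real.sin w)).comp w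
        ((Real.hasDerivAt_sin w).const_mul t); exact this)
    (ic _ (by fun_prop)) (ic _ (by fun_prop))
  simp only [Real.sin_pi, Real.sin_zero, mul_zero, Real.sin_zero] at h
  rw [← intervalIntegral.integral_const_mul]
  rw [show (∫ u in (0:ℝ)..π, t * (Real.cos u ^ 2 * Real.cos (t * Real.sin u)))
      = ∫ u in (0:ℝ)..π, Real.cos u * (Real.cos (t * Real.sin u) * (t * Real.cos u))
      from integral_congr (fun u _ => by ring)]
  rw [h]
  rw [show (∫ u in (0:ℝ)..π, -Real.sin u * Real.sin (t * Real.sin u))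
      = ∫ u in (0:ℝ)..π, -(Real.sin u * Real.sin (t * Real.sin u))
      from integral_congr (fun u _ => by ring), intervalIntegral.integral_neg]
  simp

private lemma J0d_eq (t : ℝ) : J0d t = -besselJ1 t := by
  rw [besselJ1_eq]
  unfold J0d
  rw [intervalIntegral.integral_neg]
  ring

private lemma J0dd_eq (t : ℝ) (ht : t ≠ 0) : J0dd t = -besselJ0 t - J0d t / t := by
  have hp := parts t
  unfold J0dd besselJ0 J0d
  have e1 : (∫ u in (0:ℝ)..π, -(Real.sin u ^ 2 * Real.cos (t * Real.sin u)))
      = ∫ u in (0:ℝ)..π, (-Real.cos (t * Real.sin u) + Real.cos u ^ 2 * Real.cos (t * Real.sin u)) := by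
    apply integral_congr
    intro u _
    have hsc := Real.sin_sq_add_cos_sq u
    linear_combination (-Real.cos (t * Real.sin u)) * hsc
  rw [e1, integral_add (ic _ (by fun_prop)) (ic _ (by fun_prop)), intervalIntegral.integral_neg,
    intervalIntegral.integral_neg]
  have hπ : (π:ℝ) ≠ 0 := Real.pi_ne_zero
  have hB : (∫ u in (0:ℝ)..π, Real.cos u ^ 2 * Real.cos (t * Real.sin u))
      = (∫ u in (0:ℝ)..π, Real.sin u * Real.sin (t * Real.sin u)) / t := by
    rw [eq_div_iff ht]; linear_combination hp
  rw [hB]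
  field_simp
  ring

private noncomputable def MM (t : ℝ) : ℝ := besselJ0 t ^ 2 + J0d t ^ 2

private lemma hasDerivAt_MM (t : ℝ) :
    HasDerivAt MM (2 * besselJ0 t * J0d t + 2 * J0d t * J0dd t) t := by
  have h := ((hasDerivAt_besselJ0 t).pow 2).add ((hasDerivAt_J0d t).pow 2)
  refine h.congr_deriv ?_
  push_cast; ring

private lemma MM_anti : AntitoneOn MM (Set.Icc (3:ℝ) 12) := by
  apply antitoneOn_of_deriv_nonpos (convex_Icc _ _)
  · have hdiff : Differentiable ℝ MM := fun t => (hasDerivAt_MM t).differentiableAt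
    exact hdiff.continuous.continuousOn
  · exact fun x _ => ((hasDerivAt_MM x).differentiableAt).differentiableWithinAt
  · intro x hx
    rw [interior_Icc] at hx
    have hx0 : (0:ℝ) < x := by linarith [hx.1]
    rw [(hasDerivAt_MM x).deriv, J0dd_eq x (ne_of_gt hx0)]
    have e : 2 * besselJ0 x * J0d x + 2 * J0d x * (-besselJ0 x - J0d x / x)
        = -(2 * J0d x ^ 2) / x := by field_simp; ring
    rw [e]
    apply div_nonpos_of_nonpos_of_nonneg _ hx0.le
    nlinarith [sq_nonneg (J0d x)]

private lemma J0_3_lb : -(426461/1638400 : ℝ) ≤ besselJ0 3 := by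
  have m1 : (∫ u in (0:ℝ)..π, (1 - (3*Real.sin u)^2/2 + (3*Real.sin u)^4/24
      - (3*Real.sin u)^6/720 + (3*Real.sin u)^8/40320 - (3*Real.sin u)^10/3628800))
      ≤ ∫ u in (0:ℝ)..π, Real.cos (3*Real.sin u) := by
    apply integral_mono_on pi_pos.le (ic _ (by fun_prop)) (ic _ (by fun_prop))
    intro u hu
    have hs : 0 ≤ Real.sin u := Real.sin_nonneg_of_nonneg_of_le_pi hu.1 hu.2
    exact cos_lb5 (3*Real.sin u) (by positivity)
  have e : (∫ u in (0:ℝ)..π, (1 - (3*Real.sin u)^2/2 + (3*Real.sin u)^4/24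
      - (3*Real.sin u)^6/720 + (3*Real.sin u)^8/40320 - (3*Real.sin u)^10/3628800))
      = ∫ u in (0:ℝ)..π, ((1:ℝ) + (-9/2) * Real.sin u ^ 2 + (81/24) * Real.sin u ^ 4
        + (-729/720) * Real.sin u ^ 6 + (6561/40320) * Real.sin u ^ 8
        + (-59049/3628800) * Real.sin u ^ 10 + 0 * Real.sin u ^ 12) :=
    integral_congr (fun u _ => by ring)
  rw [e, int_lin6] at m1
  have h2 : π * (-(426461/1638400 : ℝ)) ≤ ∫ u in (0:ℝ)..π, Real.cos (3*Real.sin u) := by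
    have : ((1:ℝ) + (-9/2) * (1/2) + (81/24) * (3/8) + (-729/720) * (5/16)
        + (6561/40320) * (35/128) + (-59049/3628800) * (63/256) + 0 * (231/1024))
        = -(426461/1638400 : ℝ) := by norm_num
    rw [this] at m1; exact m1
  have h3 := mul_le_mul_of_nonneg_left h2 (le_of_lt (by positivity : (0:ℝ) < 1/π))
  rw [show (1/π) * (π * (-(426461/1638400:ℝ))) = -(426461/1638400:ℝ) by field_simp; try ring] at h3
  unfold besselJ0
  exact h3

private lemma J0_3_ub : besselJ0 3 ≤ -(1363363/5242880 : ℝ) := by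
  have m1 : (∫ u in (0:ℝ)..π, Real.cos (3*Real.sin u))
      ≤ ∫ u in (0:ℝ)..π, (1 - (3*Real.sin u)^2/2 + (3*Real.sin u)^4/24
      - (3*Real.sin u)^6/720 + (3*Real.sin u)^8/40320 - (3*Real.sin u)^10/3628800
      + (3*Real.sin u)^12/479001600) := by
    apply integral_mono_on pi_pos.le (ic _ (by fun_prop)) (ic _ (by fun_prop))
    intro u hu
    have hs : 0 ≤ Real.sin u := Real.sin_nonneg_of_nonneg_of_le_pi hu.1 hu.2
    exact cos_ub6 (3*Real.sin u) (by positivity)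
  have e : (∫ u in (0:ℝ)..π, (1 - (3*Real.sin u)^2/2 + (3*Real.sin u)^4/24
      - (3*Real.sin u)^6/720 + (3*Real.sin u)^8/40320 - (3*Real.sin u)^10/3628800
      + (3*Real.sin u)^12/479001600))
      = ∫ u in (0:ℝ)..π, ((1:ℝ) + (-9/2) * Real.sin u ^ 2 + (81/24) * Real.sin u ^ 4
        + (-729/720) * Real.sin u ^ 6 + (6561/40320) * Real.sin u ^ 8
        + (-59049/3628800) * Real.sin u ^ 10 + (531441/479001600) * Real.sin u ^ 12) :=
    integral_congr (fun u _ => by ring)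
  rw [e, int_lin6] at m1
  have h2 : (∫ u in (0:ℝ)..π, Real.cos (3*Real.sin u)) ≤ π * (-(1363363/5242880 : ℝ)) := by
    have : ((1:ℝ) + (-9/2) * (1/2) + (81/24) * (3/8) + (-729/720) * (5/16)
        + (6561/40320) * (35/128) + (-59049/3628800) * (63/256)
        + (531441/479001600) * (231/1024)) = -(1363363/5242880 : ℝ) := by norm_num
    rw [this] at m1; exact m1
  have h3 := mul_le_mul_of_nonneg_left h2 (le_of_lt (by positivity : (0:ℝ) < 1/π))
  rw [show (1/π) * (π * (-(1363363/5242880:ℝ))) = -(1363363/5242880:ℝ) by field_simp; try ring] at h3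
  unfold besselJ0
  exact h3

private lemma J1_3_lb : (2221719/6553600 : ℝ) ≤ besselJ1 3 := by
  have m1 : (∫ u in (0:ℝ)..π, Real.sin u * (3*Real.sin u - (3*Real.sin u)^3/6
      + (3*Real.sin u)^5/120 - (3*Real.sin u)^7/5040 + (3*Real.sin u)^9/362880
      - (3*Real.sin u)^11/39916800))
      ≤ ∫ u in (0:ℝ)..π, Real.sin u * Real.sin (3*Real.sin u) := by
    apply integral_mono_on pi_pos.le (ic _ (by fun_prop)) (ic _ (by fun_prop))
    intro u hu
    have hs : 0 ≤ Real.sin u := Real.sin_nonneg_of_nonneg_of_le_pi hu.1 hu.2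
    exact mul_le_mul_of_nonneg_left (sin_lb5 (3*Real.sin u) (by positivity)) hs
  have e : (∫ u in (0:ℝ)..π, Real.sin u * (3*Real.sin u - (3*Real.sin u)^3/6
      + (3*Real.sin u)^5/120 - (3*Real.sin u)^7/5040 + (3*Real.sin u)^9/362880
      - (3*Real.sin u)^11/39916800))
      = ∫ u in (0:ℝ)..π, ((0:ℝ) + 3 * Real.sin u ^ 2 + (-27/6) * Real.sin u ^ 4
        + (243/120) * Real.sin u ^ 6 + (-2187/5040) * Real.sin u ^ 8
        + (19683/362880) * Real.sin u ^ 10 + (-177147/39916800) * Real.sin u ^ 12) :=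
    integral_congr (fun u _ => by ring)
  rw [e, int_lin6] at m1
  have h2 : π * ((2221719/6553600 : ℝ)) ≤ ∫ u in (0:ℝ)..π, Real.sin u * Real.sin (3*Real.sin u) := by
    have : ((0:ℝ) + 3 * (1/2) + (-27/6) * (3/8) + (243/120) * (5/16) + (-2187/5040) * (35/128)
        + (19683/362880) * (63/256) + (-177147/39916800) * (231/1024))
        = (2221719/6553600 : ℝ) := by norm_num
    rw [this] at m1; exact m1
  have h3 := mul_le_mul_of_nonneg_left h2 (le_of_lt (by positivity : (0:ℝ) < 1/π))
  rw [show (1/π) * (π * ((2221719/6553600:ℝ))) = (2221719/6553600:ℝ) by field_simp; try ring] at h3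
  rw [besselJ1_eq]
  exact h3

private lemma J1_3_ub : besselJ1 3 ≤ (55707/163840 : ℝ) := by
  have m1 : (∫ u in (0:ℝ)..π, Real.sin u * Real.sin (3*Real.sin u))
      ≤ ∫ u in (0:ℝ)..π, Real.sin u * (3*Real.sin u - (3*Real.sin u)^3/6
      + (3*Real.sin u)^5/120 - (3*Real.sin u)^7/5040 + (3*Real.sin u)^9/362880) := by
    apply integral_mono_on pi_pos.le (ic _ (by fun_prop)) (ic _ (by fun_prop))
    intro u hu
    have hs : 0 ≤ Real.sin u := Real.sin_nonneg_of_nonneg_of_le_pi hu.1 hu.2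
    exact mul_le_mul_of_nonneg_left (sin_ub4 (3*Real.sin u) (by positivity)) hs
  have e : (∫ u in (0:ℝ)..π, Real.sin u * (3*Real.sin u - (3*Real.sin u)^3/6
      + (3*Real.sin u)^5/120 - (3*Real.sin u)^7/5040 + (3*Real.sin u)^9/362880))
      = ∫ u in (0:ℝ)..π, ((0:ℝ) + 3 * Real.sin u ^ 2 + (-27/6) * Real.sin u ^ 4
        + (243/120) * Real.sin u ^ 6 + (-2187/5040) * Real.sin u ^ 8
        + (19683/362880) * Real.sin u ^ 10 + 0 * Real.sin u ^ 12) :=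
    integral_congr (fun u _ => by ring)
  rw [e, int_lin6] at m1
  have h2 : (∫ u in (0:ℝ)..π, Real.sin u * Real.sin (3*Real.sin u)) ≤ π * (55707/163840 : ℝ) := by
    have : ((0:ℝ) + 3 * (1/2) + (-27/6) * (3/8) + (243/120) * (5/16) + (-2187/5040) * (35/128)
        + (19683/362880) * (63/256) + 0 * (231/1024)) = (55707/163840 : ℝ) := by norm_num
    rw [this] at m1; exact m1
  have h3 := mul_le_mul_of_nonneg_left h2 (le_of_lt (by positivity : (0:ℝ) < 1/π))
  rw [show (1/π) * (π * ((55707/163840:ℝ))) = (55707/163840:ℝ) by field_simp; try ring] at h3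
  rw [besselJ1_eq]
  exact h3

private lemma MM3 : MM 3 ≤ 0.184 := by
  have h0l := J0_3_lb
  have h0u := J0_3_ub
  have h1l := J1_3_lb
  have h1u := J1_3_ub
  unfold MM
  rw [J0d_eq]
  nlinarith [mul_nonneg (sub_nonneg.2 h0l) (sub_nonneg.2 h0u),
    mul_nonneg (sub_nonneg.2 h1l) (sub_nonneg.2 h1u)]

theorem stmt19 (t : ℝ) (ht : t ∈ Set.Icc (3:ℝ) 12) :
    |deriv (fun u : ℝ => |besselJ0 u| ^ 3) t| = 3 * besselJ0 t ^ 2 * |besselJ1 t| ∧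
    3 * besselJ0 t ^ 2 * |besselJ1 t| < 0.1 := by
  obtain ⟨ht1, ht2⟩ := ht
  have hcomp : HasDerivAt (fun u : ℝ => |besselJ0 u| ^ 3)
      ((3 * besselJ0 t * |besselJ0 t|) * J0d t) t :=
    (hasDerivAt_abs_cube (besselJ0 t)).comp t (hasDerivAt_besselJ0 t)
  constructor
  · rw [hcomp.deriv, J0d_eq]
    have h1 : abs (3 * besselJ0 t * |besselJ0 t|) = 3 * besselJ0 t ^ 2 := by
      rw [abs_mul, abs_mul, abs_abs, abs_of_nonneg (by norm_num : (0:ℝ) ≤ 3)]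
      rw [show besselJ0 t ^ 2 = |besselJ0 t| ^ 2 from (sq_abs _).symm]
      ring
    rw [abs_mul, abs_neg, h1]
  · have hM : MM t ≤ MM 3 :=
      MM_anti (Set.left_mem_Icc.2 (by norm_num)) ⟨ht1, ht2⟩ ht1
    have hMt : MM t = besselJ0 t ^ 2 + |besselJ1 t| ^ 2 := by
      unfold MM
      rw [J0d_eq, show (-besselJ1 t) ^ 2 = |besselJ1 t| ^ 2 by rw [sq_abs]; ring]
    have hB : besselJ0 t ^ 2 + |besselJ1 t| ^ 2 ≤ 0.184 := by
      rw [← hMt]; linarith [MM3]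
    have hy : (0:ℝ) ≤ |besselJ1 t| := abs_nonneg _
    set x := besselJ0 t
    set y := |besselJ1 t|
    nlinarith [mul_nonneg (sq_nonneg (y - 0.248)) hy, sq_nonneg (y - 0.248), sq_nonneg x,
      mul_nonneg (sq_nonneg x) hy]
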